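/- Let B₁ be a nonzero real constant, let Λ : ℝ → ℝ be differentiable, and let Ψ : ℝ² → ℝ (arguments Ψ(x,v)) be twice continuously differentiable, such that for all (x,v): (i) B₁·Λ(x) + Ψ_vv(x,v) = 0, and (ii) 2·Ψ_v(x,v) + Λ′(x) + v·Ψ_vv(x,v) = 0. Then Λ(x) = 0 for all x. -/
import Mathlib

/-- If `B₁ ≠ 0`, `B₁·Λ(x) + Ψ_vv(x,v) = 0` and
`2·Ψ_v(x,v) + Λ′(x) + v·Ψ_vv(x,v) = 0` for all `(x,v)`, then `Λ ≡ 0`. -/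
theorem stmt11
    (B₁ : ℝ) (hB₁ : B₁ ≠ 0)
    (Λ : ℝ → ℝ) (hΛ : Differentiable ℝ Λ)
    (Ψ : ℝ → ℝ → ℝ) (hΨ : ContDiff ℝ 2 (Function.uncurry Ψ))
    (h1 : ∀ x v : ℝ, B₁ * Λ x + deriv (fun w => deriv (Ψ x) w) v = 0)
    (h2 : ∀ x v : ℝ,
      2 * deriv (Ψ x) v + deriv Λ x + v * deriv (fun w => deriv (Ψ x) w) v = 0) :
    ∀ x : ℝ, Λ x = 0 := by
  intro x
  have hfun : (fun w => deriv (Ψ x) w)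
      = fun w => (w * (B₁ * Λ x) - deriv Λ x) / 2 := by
    funext w
    linear_combination (h2 x w) / 2 - w / 2 * (h1 x w)
  have hder : deriv (fun w => deriv (Ψ x) w) 0 = B₁ * Λ x / 2 := by
    rw [hfun]
    have h : HasDerivAt (fun w : ℝ => (w * (B₁ * Λ x) - deriv Λ x) / 2)
        ((B₁ * Λ x) / 2) 0 := by
      simpa using (((hasDerivAt_id (0:ℝ)).mul_const (B₁ * Λ x)).sub_const
        (deriv Λ x)).div_const 2
    exact h.deriv
  have h0 := h1 x 0
  rw [hder] at h0
  have h3 : B₁ * Λ x = 0 := by linarith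
  rcases mul_eq_zero.mp h3 with h | h
  · exact absurd h hB₁
  · exact h
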